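/- Let Z be a closed subspace of a complex Hilbert space H. Then the set G^Z := {P : P is an orthogonal projection on H and range(P) ∔ Z = H} is open in the set of all orthogonal projections on H, where the set of orthogonal projections carries the topology inherited from the operator norm on B(H). -/

import Mathlib

open ContinuousLinearMap

/-- `P` is an orthogonal projection: idempotent and self-adjoint. -/
def IsOrthProjection {H : Type*} [NormedAddCommGroup H] [InnerProductSpace ℂ H]
    [CompleteSpace H] (P : H →L[ℂ] H) : Prop :=
  P ∘L P = P ∧ IsSelfAdjoint P

section aux

variable {H : Type*} [NormedAddCommGroup H] [InnerProductSpace ℂ H] [CompleteSpace H]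

lemma IsOrthProjection.apply_mem_range {P : H →L[ℂ] H} (hP : IsOrthProjection P)
    {x : H} (hx : x ∈ LinearMap.range (P : H →ₗ[ℂ] H)) : P x = x := by
  obtain ⟨y, rfl⟩ := hx
  have := congrArg (fun T : H →L[ℂ] H => T y) hP.1
  simpa using this

lemma IsOrthProjection.isClosed_range {P : H →L[ℂ] H} (hP : IsOrthProjection P) :
    IsClosed ((LinearMap.range (P : H →ₗ[ℂ] H) : Submodule ℂ H) : Set H) := by
  have : ((LinearMap.range (P : H →ₗ[ℂ] H) : Submodule ℂ H) : Set H) = {x | P x - x = 0} := by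
    ext x
    constructor
    · intro hx; simp [hP.apply_mem_range hx]
    · intro hx
      have : P x = x := by simpa [sub_eq_zero] using hx
      exact ⟨x, this⟩
  rw [this]
  exact isClosed_eq (by fun_prop) continuous_const

/-- Buckholtz-type criterion: `range P ∔ Z = H` iff `P - Q` is invertible,
where `Q` is the orthogonal projection onto `Z`. -/
lemma isCompl_iff_isUnit (Z : Submodule ℂ H) (hZ : IsClosed (Z : Set H))
    [CompleteSpace Z] {P : H →L[ℂ] H} (hP : IsOrthProjection P) :
    IsCompl (LinearMap.range (P : H →ₗ[ℂ] H)) Z ↔ IsUnit (P - Z.subtypeL ∘L Z.orthogonalProjection) := by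
  set Q : H →L[ℂ] H := Z.subtypeL ∘L Z.orthogonalProjection with hQdef
  have hQmem : ∀ x, Q x ∈ Z := fun x => (Z.orthogonalProjection x).2
  have hQid : ∀ x ∈ Z, Q x = x := fun x hx =>
    Submodule.starProjection_eq_self_iff.2 hx
  have hQsa : IsSelfAdjoint Q := isSelfAdjoint_starProjection Z
  have hDsa : IsSelfAdjoint (P - Q) := hP.2.sub hQsa
  set M := LinearMap.range (P : H →ₗ[ℂ] H) with hM
  constructor
  · intro hc
    -- the (continuous) projection onto `M` along `Z`
    set E : H →L[ℂ] H :=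
      M.subtypeL ∘L M.linearProjOfClosedCompl Z hc hP.isClosed_range hZ with hE
    have hEapp : ∀ x, E x = ↑(M.projectionOnto Z hc x) := fun x => by
      simp [hE, Submodule.coe_continuous_linearProjOfClosedCompl']
    have hEleft : ∀ x ∈ M, E x = x := fun x hx => by
      rw [hEapp]
      exact congrArg _ (Submodule.projectionOnto_apply_left hc ⟨x, hx⟩)
    have hEright : ∀ x ∈ Z, E x = 0 := fun x hx => by
      rw [hEapp, Submodule.projectionOnto_apply_of_mem_right hc hx]; rfl
    have hEmem : ∀ x, E x ∈ M := fun x => by rw [hEapp]; exact (M.projectionOnto Z hc x).2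
    have hsub : ∀ x, x - E x ∈ Z := fun x => by
      rw [← Submodule.projectionOnto_apply_eq_zero_iff (q := Z) hc, ← Submodule.coe_eq_zero,
        ← hEapp]
      simp [hEleft _ (hEmem x)]
    -- key operator identities
    have h1 : E * (P - Q) = P := by
      ext x
      simp only [mul_apply_eq_comp, map_sub, sub_apply]
      rw [hEleft (P x) ⟨x, rfl⟩, hEright _ (hQmem x), sub_zero]
    have h2 : (P - Q) * E = 1 - Q := by
      ext x
      simp only [mul_apply_eq_comp, sub_apply, one_apply_eq_self]
      have h3 : P (E x) = E x := hP.apply_mem_range (hEmem x)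
      have h4 : Q (x - E x) = x - E x := hQid _ (hsub x)
      rw [h3]
      rw [map_sub] at h4
      rw [← sub_eq_zero] at h4 ⊢
      abel_nf at h4 ⊢
      rw [← h4]
    have h3 : (P - Q) * star E = P := by
      have := congrArg star h1
      rwa [star_mul, hDsa.star_eq, hP.2.star_eq] at this
    have hright : (P - Q) * (E + star E - 1) = 1 := by
      rw [mul_sub, mul_add, h2, h3, mul_one]
      abel
    have hleft : (E + star E - 1) * (P - Q) = 1 := by
      have := congrArg star hright
      rwa [star_mul, hDsa.star_eq, star_sub, star_one, star_add, star_star, add_comm (star E)]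
        at this
    exact ⟨⟨P - Q, E + star E - 1, hright, hleft⟩, rfl⟩
  · intro hu
    obtain ⟨u, hu⟩ := hu
    constructor
    · rw [disjoint_iff]
      ext x
      simp only [Submodule.mem_inf, Submodule.mem_bot]
      constructor
      · rintro ⟨hxM, hxZ⟩
        have h0 : (P - Q) x = 0 := by simp [hP.apply_mem_range hxM, hQid x hxZ]
        have : (↑u⁻¹ * ↑u : H →L[ℂ] H) x = x := by rw [u.inv_mul]; rfl
        rw [mul_apply_eq_comp, hu, h0, map_zero] at this
        exact this.symm
      · rintro rfl; simp
    · rw [codisjoint_iff, eq_top_iff]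
      intro y _
      have : (↑u * ↑u⁻¹ : H →L[ℂ] H) y = y := by rw [u.mul_inv]; rfl
      rw [mul_apply_eq_comp, hu, sub_apply] at this
      rw [← this]
      exact Submodule.sub_mem_sup ⟨_, rfl⟩ (hQmem _)

end aux

/-- For a closed subspace `Z` of a complex Hilbert space `H`, the set
`G^Z = {P orthogonal projection : range P ∔ Z = H}` is open in the space of all
orthogonal projections on `H` (with the operator-norm topology). -/
theorem isOpen_complementary_projections {H : Type*} [NormedAddCommGroup H]
    [InnerProductSpace ℂ H] [CompleteSpace H]
    (Z : Submodule ℂ H) (hZ : IsClosed (Z : Set H)) :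
    IsOpen {P : {T : H →L[ℂ] H // IsOrthProjection T} |
      IsCompl (LinearMap.range ((P : H →L[ℂ] H) : H →ₗ[ℂ] H)) Z} := by
  haveI : CompleteSpace Z := hZ.completeSpace_coe
  have hset : {P : {T : H →L[ℂ] H // IsOrthProjection T} |
      IsCompl (LinearMap.range ((P : H →L[ℂ] H) : H →ₗ[ℂ] H)) Z} =
      (fun P : {T : H →L[ℂ] H // IsOrthProjection T} =>
        (P : H →L[ℂ] H) - Z.subtypeL ∘L Z.orthogonalProjection) ⁻¹' {T | IsUnit T} := by
    ext P
    exact isCompl_iff_isUnit Z hZ P.2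
  rw [hset]
  exact (Units.isOpen).preimage (by fun_prop)
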